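/- Let u_D'(r) = 2r/(1-r²) and u_{D*}'(r) = -(1 + log r)/(r log r). Then u_{D*}'(r)/u_D'(r) < 1 for all r ∈ (1/e, 1), i.e., u_{D*}'(r) < u_D'(r) on that interval. -/

import Mathlib

open Real Set

lemma key_log_ineq : ∀ r ∈ Set.Ioo (0:ℝ) 1, Real.log r < (r^2 - 1) / (r^2 + 1) := by
  have hanti : StrictAntiOn (fun r : ℝ => (r^2 - 1) / (r^2 + 1) - Real.log r) (Set.Ioc 0 1) := by
    apply strictAntiOn_of_deriv_neg (convex_Ioc 0 1)
    · apply ContinuousOn.sub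
      · apply ContinuousOn.div (by fun_prop) (by fun_prop)
        intro x hx; nlinarith [sq_nonneg x]
      · exact Real.continuousOn_log.mono (by intro x hx; exact ne_of_gt hx.1)
    · intro x hx
      rw [interior_Ioc] at hx
      obtain ⟨hx0, hx1⟩ := hx
      have hden : x^2 + 1 ≠ 0 := by positivity
      have h1 : HasDerivAt (fun r : ℝ => (r^2 - 1) / (r^2 + 1))
          ((2*x*(x^2+1) - (x^2-1)*(2*x)) / (x^2+1)^2) x := by
        have ha : HasDerivAt (fun r : ℝ => r^2 - 1) (2*x) x := by
          simpa using ((hasDerivAt_pow 2 x).sub_const 1)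
        have hb : HasDerivAt (fun r : ℝ => r^2 + 1) (2*x) x := by
          simpa using ((hasDerivAt_pow 2 x).add_const 1)
        exact ha.div hb hden
      have h2 : HasDerivAt (fun r : ℝ => (r^2 - 1) / (r^2 + 1) - Real.log r)
          ((2*x*(x^2+1) - (x^2-1)*(2*x)) / (x^2+1)^2 - 1/x) x := by
        have := h1.sub (Real.hasDerivAt_log (ne_of_gt hx0)); simp only [one_div]; exact this
      rw [h2.deriv]
      rw [div_sub_div _ _ (by positivity) (ne_of_gt hx0), div_neg_iff]
      right
      constructor
      · have hx2 : 0 < 1 - x^2 := by nlinarith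
        nlinarith [mul_pos hx2 hx2]
      · positivity
  intro r hr
  have := hanti (Set.mem_Ioc.2 ⟨hr.1, le_of_lt hr.2⟩) (Set.mem_Ioc.2 ⟨one_pos, le_refl 1⟩) hr.2
  simp only [Real.log_one] at this
  nlinarith [this]

theorem stmt_14 : ∀ r ∈ Set.Ioo (Real.exp (-1)) (1:ℝ),
    -(1 + Real.log r) / (r * Real.log r) / (2 * r / (1 - r ^ 2)) < 1 ∧
    -(1 + Real.log r) / (r * Real.log r) < 2 * r / (1 - r ^ 2) := by
  intro r hr
  obtain ⟨hre, hr1⟩ := hr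
  have hr0 : 0 < r := lt_trans (Real.exp_pos _) hre
  set L := Real.log r with hLdef
  have hL0 : L < 0 := Real.log_neg hr0 hr1
  have hL1 : -1 < L := by
    have := Real.log_lt_log (Real.exp_pos _) hre
    rwa [Real.log_exp] at this
  have hsq : 0 < 1 - r ^ 2 := by nlinarith
  have hkey : L < (r^2 - 1) / (r^2 + 1) := key_log_ineq r ⟨hr0, hr1⟩
  have hkey' : L * (r^2 + 1) < r^2 - 1 := by
    rwa [lt_div_iff₀ (by positivity : (0:ℝ) < r^2 + 1)] at hkey
  have hrLneg : 0 < -(r * L) := by nlinarith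
  have hmain : -(1 + L) / (r * L) < 2 * r / (1 - r ^ 2) := by
    rw [show -(1 + L) / (r * L) = (1 + L) / (-(r * L)) by ring_nf, div_lt_div_iff₀ hrLneg hsq]
    nlinarith
  refine ⟨?_, hmain⟩
  rw [div_lt_one (by positivity : 0 < 2 * r / (1 - r ^ 2))]
  exact hmain
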